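/- For every m, n ≥ 1 and E dividing lcm(m,n), the number of subgroups of exponent E of Z_m × Z_n equals (1/E) · ∑ ij, the sum over divisors i of m and j of n with lcm(i,j) = E. -/

import Mathlib

open AddSubgroup AddMonoidHom Function

private lemma card_ker_mul_card_range' {G H : Type*} [AddGroup G] [AddGroup H] [Finite G]
    (f : G →+ H) : Nat.card f.ker * Nat.card f.range = Nat.card G := by
  rw [AddSubgroup.card_eq_card_quotient_mul_card_addSubgroup f.ker,
    Nat.card_congr (QuotientAddGroup.quotientKerEquivRange f).toEquiv, mul_comm]

private lemma smul_card_eq_zero' {G : Type*} [AddGroup G] {K : AddSubgroup G} [Finite K] {x : G}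
    (hx : x ∈ K) : (Nat.card K) • x = 0 := by
  have h : (Nat.card K) • (⟨x, hx⟩ : K) = 0 := card_nsmul_eq_zero'
  have h2 := congrArg (Subtype.val) h
  push_cast at h2
  exact h2

private def tors (n k : ℕ) : AddSubgroup (ZMod n) := (AddMonoidHom.mulLeft (k : ZMod n)).ker

private lemma mem_tors {n k : ℕ} {x : ZMod n} : x ∈ tors n k ↔ (k : ZMod n) * x = 0 :=
  Iff.rfl

private lemma range_mulLeft (n k : ℕ) [NeZero n] :
    (AddMonoidHom.mulLeft (k : ZMod n)).range = zmultiples (k : ZMod n) := by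
  ext y
  constructor
  · rintro ⟨x, rfl⟩
    refine ⟨(x.val : ℤ), ?_⟩
    show (x.val : ℤ) • (k : ZMod n) = (k : ZMod n) * x
    rw [zsmul_eq_mul]
    push_cast
    rw [ZMod.natCast_val, ZMod.cast_id, mul_comm]
  · rintro ⟨z, rfl⟩
    refine ⟨(z : ZMod n), ?_⟩
    show (k : ZMod n) * (z : ZMod n) = z • (k : ZMod n)
    rw [zsmul_eq_mul, mul_comm]

private lemma card_tors {n k : ℕ} [NeZero n] (hk : k ∣ n) : Nat.card (tors n k) = k := by
  have hn : n ≠ 0 := NeZero.ne n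
  have hk0 : k ≠ 0 := by rintro rfl; exact hn (Nat.eq_zero_of_zero_dvd hk)
  have h1 := card_ker_mul_card_range' (AddMonoidHom.mulLeft (k : ZMod n))
  rw [range_mulLeft, Nat.card_zmultiples, ZMod.addOrderOf_coe k hn, Nat.gcd_comm,
    Nat.gcd_eq_left hk, Nat.card_zmod] at h1
  have h2 : n / k ≠ 0 := by
    have := Nat.div_pos (Nat.le_of_dvd (Nat.pos_of_ne_zero hn) hk) (Nat.pos_of_ne_zero hk0)
    omega
  have h3 : k * (n / k) = n := Nat.mul_div_cancel' hk
  exact Nat.eq_of_mul_eq_mul_right (Nat.pos_of_ne_zero h2) (h1.trans h3.symm)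

private lemma eq_tors {n : ℕ} [NeZero n] (K : AddSubgroup (ZMod n)) :
    K = tors n (Nat.card K) := by
  have hdvd : Nat.card K ∣ n := by
    simpa [Nat.card_zmod] using AddSubgroup.card_addSubgroup_dvd_card K
  refine AddSubgroup.eq_of_le_of_card_ge ?_ ?_
  · intro x hx
    rw [mem_tors, ← nsmul_eq_mul]
    exact smul_card_eq_zero' hx
  · rw [card_tors hdvd]

private lemma zmod_subgroup_card_inj {n : ℕ} [NeZero n] {K L : AddSubgroup (ZMod n)}
    (h : Nat.card K = Nat.card L) : K = L := by
  rw [eq_tors K, eq_tors L, h]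

private lemma cast_surj {n d : ℕ} [NeZero d] (h : d ∣ n) :
    Function.Surjective (ZMod.castHom h (ZMod d)) := fun y =>
  ⟨(y.val : ZMod n), by rw [map_natCast, ZMod.natCast_val, ZMod.cast_id]⟩
section core

open AddSubgroup AddMonoidHom Function

variable {i j d : ℕ}

private def chom (hdi : d ∣ i) (hdj : d ∣ j) (a : ZMod d) : ZMod i × ZMod j →+ ZMod d :=
  ((ZMod.castHom hdi (ZMod d)).toAddMonoidHom.comp (AddMonoidHom.fst (ZMod i) (ZMod j))) -
    ((AddMonoidHom.mulLeft a).comp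
      ((ZMod.castHom hdj (ZMod d)).toAddMonoidHom.comp (AddMonoidHom.snd (ZMod i) (ZMod j))))

private lemma mem_ker_chom {hdi : d ∣ i} {hdj : d ∣ j} {a : ZMod d} {x : ZMod i} {y : ZMod j} :
    (x, y) ∈ (chom hdi hdj a).ker ↔
      ZMod.castHom hdi (ZMod d) x = a * ZMod.castHom hdj (ZMod d) y := by
  simp [chom, AddMonoidHom.mem_ker, sub_eq_zero]

private lemma chom_surj [NeZero d] (hdi : d ∣ i) (hdj : d ∣ j) (a : ZMod d) :
    Function.Surjective (chom hdi hdj a) := by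
  intro c
  obtain ⟨x, hx⟩ := cast_surj hdi c
  exact ⟨(x, 0), by simp [chom, hx]⟩

private lemma card_ker_chom [NeZero i] [NeZero j] [NeZero d] (hdi : d ∣ i) (hdj : d ∣ j)
    (a : ZMod d) : Nat.card ((chom hdi hdj a).ker) * d = i * j := by
  have h1 := card_ker_mul_card_range' (chom hdi hdj a)
  rw [AddMonoidHom.range_eq_top.2 (chom_surj hdi hdj a)] at h1
  rw [AddSubgroup.card_top, Nat.card_zmod, Nat.card_prod, Nat.card_zmod, Nat.card_zmod] at h1
  exact h1

private lemma ker_chom_fst [NeZero d] (hdi : d ∣ i) (hdj : d ∣ j) (a : (ZMod d)ˣ) :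
    ((chom hdi hdj (a : ZMod d)).ker.map (AddMonoidHom.fst (ZMod i) (ZMod j))) = ⊤ := by
  rw [eq_top_iff']
  intro x
  obtain ⟨y, hy⟩ := cast_surj hdj (((a⁻¹ : (ZMod d)ˣ) : ZMod d) * ZMod.castHom hdi (ZMod d) x)
  exact AddSubgroup.mem_map.2 ⟨(x, y), mem_ker_chom.2 (by rw [hy, Units.mul_inv_cancel_left]), rfl⟩

private lemma ker_chom_snd [NeZero d] (hdi : d ∣ i) (hdj : d ∣ j) (a : (ZMod d)ˣ) :
    ((chom hdi hdj (a : ZMod d)).ker.map (AddMonoidHom.snd (ZMod i) (ZMod j))) = ⊤ := by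
  rw [eq_top_iff']
  intro y
  obtain ⟨x, hx⟩ := cast_surj hdi ((a : ZMod d) * ZMod.castHom hdj (ZMod d) y)
  exact AddSubgroup.mem_map.2 ⟨(x, y), mem_ker_chom.2 hx, rfl⟩

end core
section surj

open AddSubgroup AddMonoidHom Function

private lemma exists_param {i j : ℕ} [NeZero i] [NeZero j] (H : AddSubgroup (ZMod i × ZMod j))
    (h1 : H.map (AddMonoidHom.fst (ZMod i) (ZMod j)) = ⊤)
    (h2 : H.map (AddMonoidHom.snd (ZMod i) (ZMod j)) = ⊤) :
    ∃ (d : ℕ) (_ : d ≠ 0) (hdi : d ∣ i) (hdj : d ∣ j) (a : (ZMod d)ˣ),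
      H = (chom hdi hdj (a : ZMod d)).ker := by
  classical
  set K : AddSubgroup (ZMod j) := H.comap (AddMonoidHom.inr (ZMod i) (ZMod j)) with hKdef
  set M : AddSubgroup (ZMod i) := H.comap (AddMonoidHom.inl (ZMod i) (ZMod j)) with hMdef
  have memK : ∀ y : ZMod j, y ∈ K ↔ ((0 : ZMod i), y) ∈ H := fun y => Iff.rfl
  have memM : ∀ x : ZMod i, x ∈ M ↔ (x, (0 : ZMod j)) ∈ H := fun x => Iff.rfl
  have cardH1 : Nat.card K * i = Nat.card H := by
    have h := card_ker_mul_card_range' ((AddMonoidHom.fst (ZMod i) (ZMod j)).comp H.subtype)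
    have hr : ((AddMonoidHom.fst (ZMod i) (ZMod j)).comp H.subtype).range = ⊤ := by
      rw [AddMonoidHom.range_comp, AddSubgroup.range_subtype, h1]
    rw [hr, AddSubgroup.card_top, Nat.card_zmod] at h
    have hker : Nat.card ((AddMonoidHom.fst (ZMod i) (ZMod j)).comp H.subtype).ker
        = Nat.card K := Nat.card_congr
      { toFun := fun p => ⟨((p : H) : ZMod i × ZMod j).2, by
          rw [memK]
          have h0 : ((p : H) : ZMod i × ZMod j).1 = 0 := p.2
          have hmem := (p : H).2
          have heq : ((0 : ZMod i), ((p : H) : ZMod i × ZMod j).2)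
              = ((p : H) : ZMod i × ZMod j) := by rw [← h0]
          rwa [heq]⟩
        invFun := fun y => ⟨⟨(0, (y : ZMod j)), (memK _).1 y.2⟩, rfl⟩
        left_inv := fun p => by
          apply Subtype.ext; apply Subtype.ext
          have h0 : ((p : H) : ZMod i × ZMod j).1 = 0 := p.2
          exact Prod.ext h0.symm rfl
        right_inv := fun y => rfl }
    rw [hker] at h
    exact h
  have cardH2 : Nat.card M * j = Nat.card H := by
    have h := card_ker_mul_card_range' ((AddMonoidHom.snd (ZMod i) (ZMod j)).comp H.subtype)
    have hr : ((AddMonoidHom.snd (ZMod i) (ZMod j)).comp H.subtype).range = ⊤ := by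
      rw [AddMonoidHom.range_comp, AddSubgroup.range_subtype, h2]
    rw [hr, AddSubgroup.card_top, Nat.card_zmod] at h
    have hker : Nat.card ((AddMonoidHom.snd (ZMod i) (ZMod j)).comp H.subtype).ker
        = Nat.card M := Nat.card_congr
      { toFun := fun p => ⟨((p : H) : ZMod i × ZMod j).1, by
          rw [memM]
          have h0 : ((p : H) : ZMod i × ZMod j).2 = 0 := p.2
          have hmem := (p : H).2
          have heq : (((p : H) : ZMod i × ZMod j).1, (0 : ZMod j))
              = ((p : H) : ZMod i × ZMod j) := by rw [← h0]
          rwa [heq]⟩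
        invFun := fun x => ⟨⟨((x : ZMod i), 0), (memM _).1 x.2⟩, rfl⟩
        left_inv := fun p => by
          apply Subtype.ext; apply Subtype.ext
          have h0 : ((p : H) : ZMod i × ZMod j).2 = 0 := p.2
          exact Prod.ext rfl h0.symm
        right_inv := fun x => rfl }
    rw [hker] at h
    exact h
  set k := Nat.card K with hkdef
  have hk0 : 0 < k := Nat.card_pos
  have hkj : k ∣ j := by
    have := AddSubgroup.card_addSubgroup_dvd_card K
    rwa [Nat.card_zmod] at this
  set d := j / k with hddef
  have hdk : d * k = j := Nat.div_mul_cancel hkj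
  have hjne : j ≠ 0 := NeZero.ne j
  have hd0 : d ≠ 0 := by rintro h; rw [h] at hdk; omega
  have hdj : d ∣ j := ⟨k, hdk.symm⟩
  have hieq : d * Nat.card M = i := by
    have h : (d * Nat.card M) * k = i * k := by
      calc (d * Nat.card M) * k = Nat.card M * (d * k) := by ring
      _ = Nat.card M * j := by rw [hdk]
      _ = Nat.card H := cardH2
      _ = k * i := cardH1.symm
      _ = i * k := by ring
    exact Nat.eq_of_mul_eq_mul_right hk0 h
  have hdi : d ∣ i := ⟨Nat.card M, hieq.symm⟩
  haveI : NeZero d := ⟨hd0⟩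
  have hKker : K = ((ZMod.castHom hdj (ZMod d)).toAddMonoidHom).ker := by
    apply zmod_subgroup_card_inj
    have hc := card_ker_mul_card_range' (ZMod.castHom hdj (ZMod d)).toAddMonoidHom
    rw [AddMonoidHom.range_eq_top.2 (cast_surj hdj), AddSubgroup.card_top, Nat.card_zmod,
      Nat.card_zmod] at hc
    have : k * d = j := by rw [mul_comm]; exact hdk
    have := hc.trans this.symm
    exact (Nat.eq_of_mul_eq_mul_right (Nat.pos_of_ne_zero hd0) this).symm
  have hMker : M = ((ZMod.castHom hdi (ZMod d)).toAddMonoidHom).ker := by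
    apply zmod_subgroup_card_inj
    have hc := card_ker_mul_card_range' (ZMod.castHom hdi (ZMod d)).toAddMonoidHom
    rw [AddMonoidHom.range_eq_top.2 (cast_surj hdi), AddSubgroup.card_top, Nat.card_zmod,
      Nat.card_zmod] at hc
    have : Nat.card M * d = i := by rw [mul_comm]; exact hieq
    have := hc.trans this.symm
    exact (Nat.eq_of_mul_eq_mul_right (Nat.pos_of_ne_zero hd0) this).symm
  obtain ⟨y₁, hy₁⟩ := cast_surj hdj (1 : ZMod d)
  obtain ⟨p, hpH, hpy⟩ := AddSubgroup.mem_map.1 (h2 ▸ AddSubgroup.mem_top y₁)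
  set x₁ := p.1 with hx₁def
  have hx₁y₁ : (x₁, y₁) ∈ H := by
    have : (x₁, y₁) = p := by rw [← hpy]; exact rfl
    rwa [this]
  set α := ZMod.castHom hdi (ZMod d) x₁ with hαdef
  have claim : ∀ x y, ((x, y) ∈ H ↔
      ZMod.castHom hdi (ZMod d) x = α * ZMod.castHom hdj (ZMod d) y) := by
    intro x y
    set u := (ZMod.castHom hdj (ZMod d) y).val with hu
    have huy : ((u : ZMod d)) = ZMod.castHom hdj (ZMod d) y := by
      rw [hu, ZMod.natCast_val, ZMod.cast_id]
    have hyK : y - u • y₁ ∈ K := by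
      rw [hKker]
      show ZMod.castHom hdj (ZMod d) (y - u • y₁) = 0
      rw [map_sub, map_nsmul, hy₁, nsmul_eq_mul, mul_one, huy, sub_self]
    have hy0H : ((0 : ZMod i), y - u • y₁) ∈ H := (memK _).1 hyK
    constructor
    · intro hxy
      have t2 : (x, y) - u • (x₁, y₁) - ((0 : ZMod i), y - u • y₁) ∈ H :=
        sub_mem (sub_mem hxy (nsmul_mem hx₁y₁ u)) hy0H
      have heq : (x, y) - u • (x₁, y₁) - ((0 : ZMod i), y - u • y₁)
          = (x - u • x₁, (0 : ZMod j)) := by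
        apply Prod.ext
        · show x - u • x₁ - 0 = x - u • x₁; abel
        · show y - u • y₁ - (y - u • y₁) = 0; abel
      rw [heq] at t2
      have hxM : x - u • x₁ ∈ M := (memM _).2 t2
      rw [hMker] at hxM
      have hcast : ZMod.castHom hdi (ZMod d) (x - u • x₁) = 0 := hxM
      rw [map_sub, map_nsmul, sub_eq_zero] at hcast
      rw [hcast, nsmul_eq_mul, ← huy] at *
      rw [← huy, mul_comm]
    · intro hc
      have hxM : x - u • x₁ ∈ M := by
        rw [hMker]
        show ZMod.castHom hdi (ZMod d) (x - u • x₁) = 0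
        rw [map_sub, map_nsmul, hc, nsmul_eq_mul, huy, mul_comm, sub_self]
      have t2 : (x - u • x₁, (0 : ZMod j)) ∈ H := (memM _).1 hxM
      have t3 : u • (x₁, y₁) + (x - u • x₁, (0 : ZMod j)) + ((0 : ZMod i), y - u • y₁) ∈ H :=
        add_mem (add_mem (nsmul_mem hx₁y₁ u) t2) hy0H
      have heq : (x, y) = u • (x₁, y₁) + (x - u • x₁, (0 : ZMod j))
          + ((0 : ZMod i), y - u • y₁) := by
        apply Prod.ext
        · show x = u • x₁ + (x - u • x₁) + 0; abel
        · show y = u • y₁ + 0 + (y - u • y₁); abel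
      rwa [heq]
  obtain ⟨x₂, hx₂⟩ := cast_surj hdi (1 : ZMod d)
  obtain ⟨q, hqH, hqx⟩ := AddSubgroup.mem_map.1 (h1 ▸ AddSubgroup.mem_top x₂)
  have hq2 : (x₂, q.2) ∈ H := by
    have : (x₂, q.2) = q := by rw [← hqx]; exact rfl
    rwa [this]
  have h1eq : α * ZMod.castHom hdj (ZMod d) q.2 = 1 := by
    rw [← (claim x₂ q.2).1 hq2, hx₂]
  have hunit : IsUnit α := IsUnit.of_mul_eq_one (b := ZMod.castHom hdj (ZMod d) q.2) h1eq
  refine ⟨d, hd0, hdi, hdj, hunit.unit, ?_⟩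
  ext z
  obtain ⟨x, y⟩ := z
  rw [mem_ker_chom, IsUnit.unit_spec]
  exact claim x y

end surj
section corecard

open AddSubgroup AddMonoidHom Function

private lemma ker_card_eq {i j d d' : ℕ} [NeZero i] [NeZero j] (hd0 : d ≠ 0) (hd0' : d' ≠ 0)
    (hdi : d ∣ i) (hdj : d ∣ j) (hdi' : d' ∣ i) (hdj' : d' ∣ j) (a : ZMod d) (a' : ZMod d')
    (h : (chom hdi hdj a).ker = (chom hdi' hdj' a').ker) : d = d' := by
  haveI : NeZero d := ⟨hd0⟩
  haveI : NeZero d' := ⟨hd0'⟩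
  have c1 := card_ker_chom hdi hdj a
  have c2 := card_ker_chom hdi' hdj' a'
  rw [h] at c1
  have hkpos : 0 < Nat.card (chom hdi' hdj' a').ker := Nat.card_pos
  exact Nat.eq_of_mul_eq_mul_left hkpos (c1.trans c2.symm)

private lemma ker_unit_inj {i j d : ℕ} [NeZero i] [NeZero j] (hd0 : d ≠ 0)
    (hdi : d ∣ i) (hdj : d ∣ j) {a a' : (ZMod d)ˣ}
    (h : (chom hdi hdj (a : ZMod d)).ker = (chom hdi hdj (a' : ZMod d)).ker) : a = a' := by
  haveI : NeZero d := ⟨hd0⟩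
  obtain ⟨y₁, hy₁⟩ := cast_surj hdj (1 : ZMod d)
  obtain ⟨x₁, hx₁⟩ := cast_surj hdi (a : ZMod d)
  have m1 : (x₁, y₁) ∈ (chom hdi hdj (a : ZMod d)).ker :=
    mem_ker_chom.2 (by rw [hx₁, hy₁, mul_one])
  have m2 := h ▸ m1
  have h3 := mem_ker_chom.1 m2
  rw [hx₁, hy₁, mul_one] at h3
  exact Units.ext h3

private lemma core_card (i j : ℕ) [NeZero i] [NeZero j] :
    Nat.card {H : AddSubgroup (ZMod i × ZMod j) //
        H.map (AddMonoidHom.fst (ZMod i) (ZMod j)) = ⊤ ∧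
        H.map (AddMonoidHom.snd (ZMod i) (ZMod j)) = ⊤}
      = Nat.gcd i j := by
  classical
  have hg0 : Nat.gcd i j ≠ 0 := Nat.gcd_ne_zero_left (NeZero.ne i)
  have dne : ∀ t : {d // d ∈ (Nat.gcd i j).divisors}, (t : ℕ) ≠ 0 :=
    fun t => (Nat.pos_of_mem_divisors t.2).ne'
  have dvd1 : ∀ t : {d // d ∈ (Nat.gcd i j).divisors}, (t : ℕ) ∣ i :=
    fun t => ((Nat.mem_divisors.1 t.2).1.trans (Nat.gcd_dvd_left i j))
  have dvd2 : ∀ t : {d // d ∈ (Nat.gcd i j).divisors}, (t : ℕ) ∣ j :=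
    fun t => ((Nat.mem_divisors.1 t.2).1.trans (Nat.gcd_dvd_right i j))
  haveI instF : ∀ t : {d // d ∈ (Nat.gcd i j).divisors}, Fintype (ZMod (t : ℕ))ˣ := fun t => by
    haveI : NeZero (t : ℕ) := ⟨dne t⟩
    infer_instance
  let T := {H : AddSubgroup (ZMod i × ZMod j) //
      H.map (AddMonoidHom.fst (ZMod i) (ZMod j)) = ⊤ ∧
      H.map (AddMonoidHom.snd (ZMod i) (ZMod j)) = ⊤}
  let F : (Σ t : {d // d ∈ (Nat.gcd i j).divisors}, (ZMod (t : ℕ))ˣ) → T := fun s =>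
    ⟨(chom (dvd1 s.1) (dvd2 s.1) ((s.2 : ZMod (s.1 : ℕ)))).ker, by
      haveI : NeZero ((s.1 : ℕ)) := ⟨dne s.1⟩
      exact ⟨ker_chom_fst _ _ _, ker_chom_snd _ _ _⟩⟩
  have hbij : Function.Bijective F := by
    constructor
    · rintro ⟨⟨d, hd⟩, a⟩ ⟨⟨d', hd'⟩, a'⟩ h
      have hker := congrArg Subtype.val h
      simp only [F] at hker
      have hdd : d = d' := ker_card_eq (by simpa using (Nat.pos_of_mem_divisors hd).ne')
        (by simpa using (Nat.pos_of_mem_divisors hd').ne') _ _ _ _ _ _ hker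
      subst hdd
      obtain rfl : a = a' := ker_unit_inj (by simpa using (Nat.pos_of_mem_divisors hd).ne') _ _ hker
      rfl
    · rintro ⟨H, hH1, hH2⟩
      obtain ⟨d, hd0, hdi, hdj, a, rfl⟩ := exists_param H hH1 hH2
      exact ⟨⟨⟨d, Nat.mem_divisors.2 ⟨Nat.dvd_gcd hdi hdj, hg0⟩⟩, a⟩, Subtype.ext rfl⟩
  have hcardT : Nat.card T
      = Nat.card (Σ t : {d // d ∈ (Nat.gcd i j).divisors}, (ZMod (t : ℕ))ˣ) :=
    (Nat.card_eq_of_bijective F hbij).symm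
  show Nat.card T = Nat.gcd i j
  rw [hcardT, Nat.card_eq_fintype_card, Fintype.card_sigma]
  calc ∑ t : {d // d ∈ (Nat.gcd i j).divisors}, Fintype.card (ZMod (t : ℕ))ˣ
      = ∑ t : {d // d ∈ (Nat.gcd i j).divisors}, Nat.totient (t : ℕ) :=
        Finset.sum_congr rfl (fun t _ => by
          haveI : NeZero (t : ℕ) := ⟨dne t⟩
          exact ZMod.card_units_eq_totient _)
    _ = ∑ t ∈ (Nat.gcd i j).divisors, Nat.totient t := Finset.sum_coe_sort _ _
    _ = Nat.gcd i j := Nat.sum_totient _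

end corecard
section transport

open AddSubgroup AddMonoidHom Function

private lemma card_map_inj {G G' : Type*} [AddGroup G] [AddGroup G'] {f : G →+ G'}
    (hf : Function.Injective f) (C : AddSubgroup G) :
    Nat.card (C.map f) = Nat.card C := by
  rw [← SetLike.coe_sort_coe, AddSubgroup.coe_map, Nat.card_image_of_injective hf,
    SetLike.coe_sort_coe]

private lemma card_fiber (m n i j : ℕ) [NeZero m] [NeZero n] (hi : i ∣ m) (hj : j ∣ n) :
    Nat.card {H : AddSubgroup (ZMod m × ZMod n) //
      Nat.card (H.map (AddMonoidHom.fst (ZMod m) (ZMod n))) = i ∧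
      Nat.card (H.map (AddMonoidHom.snd (ZMod m) (ZMod n))) = j} = Nat.gcd i j := by
  classical
  have hi0 : i ≠ 0 := by rintro rfl; exact (NeZero.ne m) (Nat.eq_zero_of_zero_dvd hi)
  have hj0 : j ≠ 0 := by rintro rfl; exact (NeZero.ne n) (Nat.eq_zero_of_zero_dvd hj)
  haveI : NeZero i := ⟨hi0⟩
  haveI : NeZero j := ⟨hj0⟩
  set A := tors m i with hA
  set B := tors n j with hB
  have cardA : Nat.card A = i := card_tors hi
  have cardB : Nat.card B = j := card_tors hj
  have eA : ZMod i ≃+ A := by rw [← cardA]; exact zmodAddCyclicAddEquiv inferInstance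
  have eB : ZMod j ≃+ B := by rw [← cardB]; exact zmodAddCyclicAddEquiv inferInstance
  set f1 : ZMod i →+ ZMod m := A.subtype.comp eA.toAddMonoidHom with hf1
  set f2 : ZMod j →+ ZMod n := B.subtype.comp eB.toAddMonoidHom with hf2
  have hf1inj : Function.Injective f1 := A.subtype_injective.comp eA.injective
  have hf2inj : Function.Injective f2 := B.subtype_injective.comp eB.injective
  have hrangef1 : f1.range = A := by
    rw [hf1, AddMonoidHom.range_comp, AddMonoidHom.range_eq_top.2 eA.surjective,
      ← AddMonoidHom.range_eq_map, AddSubgroup.range_subtype]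
  have hrangef2 : f2.range = B := by
    rw [hf2, AddMonoidHom.range_comp, AddMonoidHom.range_eq_top.2 eB.surjective,
      ← AddMonoidHom.range_eq_map, AddSubgroup.range_subtype]
  set ψ : ZMod i × ZMod j →+ ZMod m × ZMod n := AddMonoidHom.prodMap f1 f2 with hψ
  have hinj : Function.Injective ψ := by
    have h : ⇑ψ = Prod.map f1 f2 := rfl
    rw [h]
    exact hf1inj.prodMap hf2inj
  have hrange : ψ.range = A.prod B := by
    ext z
    constructor
    · rintro ⟨⟨x, y⟩, rfl⟩
      exact AddSubgroup.mem_prod.2 ⟨(eA x).2, (eB y).2⟩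
    · intro hz
      obtain ⟨hz1, hz2⟩ := AddSubgroup.mem_prod.1 hz
      refine ⟨(eA.symm ⟨z.1, hz1⟩, eB.symm ⟨z.2, hz2⟩), ?_⟩
      show (f1 _, f2 _) = z
      rw [hf1, hf2]
      show ((A.subtype (eA (eA.symm ⟨z.1, hz1⟩)) : ZMod m),
        (B.subtype (eB (eB.symm ⟨z.2, hz2⟩)) : ZMod n)) = z
      rw [eA.apply_symm_apply, eB.apply_symm_apply]
      rfl
  have hfstψ : ∀ H' : AddSubgroup (ZMod i × ZMod j),
      (H'.map ψ).map (AddMonoidHom.fst (ZMod m) (ZMod n))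
        = (H'.map (AddMonoidHom.fst (ZMod i) (ZMod j))).map f1 := by
    intro H'
    rw [AddSubgroup.map_map, AddSubgroup.map_map]
    congr 1
  have hsndψ : ∀ H' : AddSubgroup (ZMod i × ZMod j),
      (H'.map ψ).map (AddMonoidHom.snd (ZMod m) (ZMod n))
        = (H'.map (AddMonoidHom.snd (ZMod i) (ZMod j))).map f2 := by
    intro H'
    rw [AddSubgroup.map_map, AddSubgroup.map_map]
    congr 1
  have hmaptopA : (⊤ : AddSubgroup (ZMod i)).map f1 = A := by
    rw [← AddMonoidHom.range_eq_map]; exact hrangef1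
  have hmaptopB : (⊤ : AddSubgroup (ZMod j)).map f2 = B := by
    rw [← AddMonoidHom.range_eq_map]; exact hrangef2
  -- forward: full projections give the right cards
  have hcards : ∀ H' : AddSubgroup (ZMod i × ZMod j),
      H'.map (AddMonoidHom.fst (ZMod i) (ZMod j)) = ⊤ →
      H'.map (AddMonoidHom.snd (ZMod i) (ZMod j)) = ⊤ →
      Nat.card ((H'.map ψ).map (AddMonoidHom.fst (ZMod m) (ZMod n))) = i ∧
      Nat.card ((H'.map ψ).map (AddMonoidHom.snd (ZMod m) (ZMod n))) = j := by
    intro H' h1 h2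
    constructor
    · rw [hfstψ, h1, hmaptopA]; exact cardA
    · rw [hsndψ, h2, hmaptopB]; exact cardB
  -- backward facts
  have hback : ∀ H : AddSubgroup (ZMod m × ZMod n),
      Nat.card (H.map (AddMonoidHom.fst (ZMod m) (ZMod n))) = i →
      Nat.card (H.map (AddMonoidHom.snd (ZMod m) (ZMod n))) = j →
      ((H.comap ψ).map ψ = H ∧
        (H.comap ψ).map (AddMonoidHom.fst (ZMod i) (ZMod j)) = ⊤ ∧
        (H.comap ψ).map (AddMonoidHom.snd (ZMod i) (ZMod j)) = ⊤) := by
    intro H hc1 hc2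
    have hπ1 : H.map (AddMonoidHom.fst (ZMod m) (ZMod n)) = A :=
      zmod_subgroup_card_inj (by rw [hc1, cardA])
    have hπ2 : H.map (AddMonoidHom.snd (ZMod m) (ZMod n)) = B :=
      zmod_subgroup_card_inj (by rw [hc2, cardB])
    have hle : H ≤ A.prod B := by
      rintro ⟨x, y⟩ hxy
      refine AddSubgroup.mem_prod.2 ⟨?_, ?_⟩
      · rw [← hπ1]; exact AddSubgroup.mem_map.2 ⟨(x, y), hxy, rfl⟩
      · rw [← hπ2]; exact AddSubgroup.mem_map.2 ⟨(x, y), hxy, rfl⟩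
    have hmc : (H.comap ψ).map ψ = H :=
      AddSubgroup.map_comap_eq_self (by rw [hrange]; exact hle)
    refine ⟨hmc, ?_, ?_⟩
    · have e1 : ((H.comap ψ).map (AddMonoidHom.fst (ZMod i) (ZMod j))).map f1 = A := by
        rw [← hfstψ, hmc, hπ1]
      have e2 : Nat.card ((H.comap ψ).map (AddMonoidHom.fst (ZMod i) (ZMod j))) = i := by
        rw [← card_map_inj hf1inj, e1]; exact cardA
      apply AddSubgroup.eq_top_of_card_eq
      rw [e2, Nat.card_zmod]
    · have e1 : ((H.comap ψ).map (AddMonoidHom.snd (ZMod i) (ZMod j))).map f2 = B := by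
        rw [← hsndψ, hmc, hπ2]
      have e2 : Nat.card ((H.comap ψ).map (AddMonoidHom.snd (ZMod i) (ZMod j))) = j := by
        rw [← card_map_inj hf2inj, e1]; exact cardB
      apply AddSubgroup.eq_top_of_card_eq
      rw [e2, Nat.card_zmod]
  have hEq : {H : AddSubgroup (ZMod m × ZMod n) //
      Nat.card (H.map (AddMonoidHom.fst (ZMod m) (ZMod n))) = i ∧
      Nat.card (H.map (AddMonoidHom.snd (ZMod m) (ZMod n))) = j} ≃
      {H' : AddSubgroup (ZMod i × ZMod j) //
        H'.map (AddMonoidHom.fst (ZMod i) (ZMod j)) = ⊤ ∧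
        H'.map (AddMonoidHom.snd (ZMod i) (ZMod j)) = ⊤} :=
    { toFun := fun s => ⟨s.1.comap ψ, (hback s.1 s.2.1 s.2.2).2⟩
      invFun := fun s => ⟨s.1.map ψ, hcards s.1 s.2.1 s.2.2⟩
      left_inv := fun s => Subtype.ext (hback s.1 s.2.1 s.2.2).1
      right_inv := fun s => Subtype.ext (AddSubgroup.comap_map_eq_self_of_injective hinj s.1) }
  rw [Nat.card_congr hEq]
  exact core_card i j

end transport
section expo

open AddSubgroup AddMonoidHom Function

private lemma exp_eq (m n : ℕ) [NeZero m] [NeZero n] (H : AddSubgroup (ZMod m × ZMod n)) :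
    AddMonoid.exponent H =
      Nat.lcm (Nat.card (H.map (AddMonoidHom.fst (ZMod m) (ZMod n))))
        (Nat.card (H.map (AddMonoidHom.snd (ZMod m) (ZMod n)))) := by
  set I := Nat.card (H.map (AddMonoidHom.fst (ZMod m) (ZMod n))) with hI
  set J := Nat.card (H.map (AddMonoidHom.snd (ZMod m) (ZMod n))) with hJ
  apply Nat.dvd_antisymm
  · apply AddMonoid.exponent_dvd_of_forall_nsmul_eq_zero
    rintro ⟨⟨x, y⟩, hxy⟩
    have hx : x ∈ H.map (AddMonoidHom.fst (ZMod m) (ZMod n)) :=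
      AddSubgroup.mem_map.2 ⟨(x, y), hxy, rfl⟩
    have hy : y ∈ H.map (AddMonoidHom.snd (ZMod m) (ZMod n)) :=
      AddSubgroup.mem_map.2 ⟨(x, y), hxy, rfl⟩
    have h1 : I • x = 0 := smul_card_eq_zero' hx
    have h2 : J • y = 0 := smul_card_eq_zero' hy
    apply Subtype.ext
    show (Nat.lcm I J) • ((x, y) : ZMod m × ZMod n) = 0
    have hxl : Nat.lcm I J • x = 0 := by
      obtain ⟨c, hc⟩ := Nat.dvd_lcm_left I J
      rw [hc, mul_nsmul, h1, smul_zero]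
    have hyl : Nat.lcm I J • y = 0 := by
      obtain ⟨c, hc⟩ := Nat.dvd_lcm_right I J
      rw [hc, mul_nsmul, h2, smul_zero]
    have : Nat.lcm I J • ((x, y) : ZMod m × ZMod n) = (Nat.lcm I J • x, Nat.lcm I J • y) := rfl
    rw [this, hxl, hyl]
    rfl
  · apply Nat.lcm_dvd
    · have hIc : I = AddMonoid.exponent (H.map (AddMonoidHom.fst (ZMod m) (ZMod n))) :=
        IsAddCyclic.exponent_eq_card.symm
      rw [hIc]
      apply AddMonoid.exponent_dvd_of_forall_nsmul_eq_zero
      rintro ⟨x, hx⟩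
      obtain ⟨⟨x', y'⟩, hmem, rfl⟩ := AddSubgroup.mem_map.1 hx
      have h := AddMonoid.exponent_nsmul_eq_zero (⟨(x', y'), hmem⟩ : H)
      have h0 : AddMonoid.exponent H • ((x', y') : ZMod m × ZMod n) = 0 := by
        have := congrArg Subtype.val h
        push_cast at this
        exact this
      apply Subtype.ext
      exact congrArg Prod.fst h0
    · have hJc : J = AddMonoid.exponent (H.map (AddMonoidHom.snd (ZMod m) (ZMod n))) :=
        IsAddCyclic.exponent_eq_card.symm
      rw [hJc]
      apply AddMonoid.exponent_dvd_of_forall_nsmul_eq_zero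
      rintro ⟨y, hy⟩
      obtain ⟨⟨x', y'⟩, hmem, rfl⟩ := AddSubgroup.mem_map.1 hy
      have h := AddMonoid.exponent_nsmul_eq_zero (⟨(x', y'), hmem⟩ : H)
      have h0 : AddMonoid.exponent H • ((x', y') : ZMod m × ZMod n) = 0 := by
        have := congrArg Subtype.val h
        push_cast at this
        exact this
      apply Subtype.ext
      exact congrArg Prod.snd h0

end expo
theorem stmt_12 (m n E : ℕ) (hm : 1 ≤ m) (hn : 1 ≤ n) (hE : E ∣ Nat.lcm m n) :
    Nat.card {H : AddSubgroup (ZMod m × ZMod n) // AddMonoid.exponent H = E} =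
      (∑ i ∈ m.divisors, ∑ j ∈ n.divisors,
        if Nat.lcm i j = E then i * j else 0) / E := by
  classical
  haveI : NeZero m := ⟨by omega⟩
  haveI : NeZero n := ⟨by omega⟩
  have hm0 : m ≠ 0 := by omega
  have hn0 : n ≠ 0 := by omega
  have hlcm0 : Nat.lcm m n ≠ 0 := Nat.lcm_ne_zero hm0 hn0
  have hE0 : E ≠ 0 := by rintro rfl; exact hlcm0 (Nat.eq_zero_of_zero_dvd hE)
  have hrhs : (∑ i ∈ m.divisors, ∑ j ∈ n.divisors, if Nat.lcm i j = E then i * j else 0)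
      = E * ∑ i ∈ m.divisors, ∑ j ∈ n.divisors,
          if Nat.lcm i j = E then Nat.gcd i j else 0 := by
    rw [Finset.mul_sum]
    refine Finset.sum_congr rfl fun i _ => ?_
    rw [Finset.mul_sum]
    refine Finset.sum_congr rfl fun j _ => ?_
    by_cases h : Nat.lcm i j = E
    · rw [if_pos h, if_pos h, ← h, mul_comm (Nat.lcm i j)]
      exact (Nat.gcd_mul_lcm i j).symm
    · simp [h]
  rw [hrhs, Nat.mul_div_cancel_left _ (Nat.pos_of_ne_zero hE0)]
  set S : Finset (ℕ × ℕ) :=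
    (m.divisors ×ˢ n.divisors).filter (fun p => Nat.lcm p.1 p.2 = E) with hS
  let f : {H : AddSubgroup (ZMod m × ZMod n) // AddMonoid.exponent H = E} → {p : ℕ × ℕ // p ∈ S} :=
    fun s => ⟨(Nat.card (s.1.map (AddMonoidHom.fst (ZMod m) (ZMod n))),
               Nat.card (s.1.map (AddMonoidHom.snd (ZMod m) (ZMod n)))), by
      have hd1 : Nat.card (s.1.map (AddMonoidHom.fst (ZMod m) (ZMod n))) ∣ m := by
        have := AddSubgroup.card_addSubgroup_dvd_card
          (s.1.map (AddMonoidHom.fst (ZMod m) (ZMod n)))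
        rwa [Nat.card_zmod] at this
      have hd2 : Nat.card (s.1.map (AddMonoidHom.snd (ZMod m) (ZMod n))) ∣ n := by
        have := AddSubgroup.card_addSubgroup_dvd_card
          (s.1.map (AddMonoidHom.snd (ZMod m) (ZMod n)))
        rwa [Nat.card_zmod] at this
      have hlcmE : Nat.lcm (Nat.card (s.1.map (AddMonoidHom.fst (ZMod m) (ZMod n))))
          (Nat.card (s.1.map (AddMonoidHom.snd (ZMod m) (ZMod n)))) = E := by
        rw [← exp_eq m n s.1]; exact s.2
      rw [hS]
      exact Finset.mem_filter.2 ⟨Finset.mem_product.2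
        ⟨Nat.mem_divisors.2 ⟨hd1, hm0⟩, Nat.mem_divisors.2 ⟨hd2, hn0⟩⟩, hlcmE⟩⟩
  have key : ∀ p : {p : ℕ × ℕ // p ∈ S},
      Nat.card {s : {H : AddSubgroup (ZMod m × ZMod n) // AddMonoid.exponent H = E} // f s = p}
        = Nat.gcd p.1.1 p.1.2 := by
    intro p
    have hp : p.1 ∈ (m.divisors ×ˢ n.divisors).filter (fun p => Nat.lcm p.1 p.2 = E) := p.2
    rw [Finset.mem_filter, Finset.mem_product] at hp
    obtain ⟨⟨hp1, hp2⟩, hp3⟩ := hp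
    refine (Nat.card_congr ?_).trans
      (card_fiber m n p.1.1 p.1.2 (Nat.dvd_of_mem_divisors hp1) (Nat.dvd_of_mem_divisors hp2))
    exact
      { toFun := fun s => ⟨s.1.1, by
          have h := congrArg Subtype.val s.2
          exact ⟨congrArg Prod.fst h, congrArg Prod.snd h⟩⟩
        invFun := fun H => ⟨⟨H.1, by rw [exp_eq m n H.1, H.2.1, H.2.2]; exact hp3⟩,
          Subtype.ext (Prod.ext H.2.1 H.2.2)⟩
        left_inv := fun s => by apply Subtype.ext; apply Subtype.ext; rfl
        right_inv := fun H => by apply Subtype.ext; rfl }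
  have hcount : Nat.card {H : AddSubgroup (ZMod m × ZMod n) // AddMonoid.exponent H = E}
      = ∑ p ∈ S, Nat.gcd p.1 p.2 := by
    haveI : Finite (AddSubgroup (ZMod m × ZMod n)) :=
      Finite.of_injective (fun H => (H : Set (ZMod m × ZMod n))) SetLike.coe_injective
    haveI : Fintype {H : AddSubgroup (ZMod m × ZMod n) // AddMonoid.exponent H = E} :=
      Fintype.ofFinite _
    rw [Nat.card_eq_fintype_card, Fintype.card_congr (Equiv.sigmaFiberEquiv f).symm,
      Fintype.card_sigma]
    have hterm : ∀ p : {p : ℕ × ℕ // p ∈ S},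
        Fintype.card {s // f s = p} = Nat.gcd p.1.1 p.1.2 := fun p => by
      rw [← Nat.card_eq_fintype_card]; exact key p
    rw [Finset.sum_congr rfl (fun p _ => hterm p)]
    exact Finset.sum_coe_sort S (fun p => Nat.gcd p.1 p.2)
  rw [hcount, hS, Finset.sum_filter, Finset.sum_product]
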